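/- Let n, k be positive integers with k ≤ n, and define f(t) = ∫_0^t ((t-u)^{n-1}/(n-1)!) * ((1-u)^{k-1}/(k-1)!) du. Then for any integer i with n ≤ i ≤ 2n-1, the i-th derivative of f at t = 1 equals (-1)^{k-1} if i = k+n-1 and 0 otherwise. -/

import Mathlib

open Finset in
lemma lemA11 : ∀ (r a : ℕ) (t : ℝ), (∫ u in (0:ℝ)..t, (t-u)^a * u^r)
    = (a.factorial * r.factorial / (a+r+1).factorial) * t^(a+r+1) := by
  intro r
  induction r with
  | zero =>
    intro a t
    simp only [pow_zero, mul_one]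
    rw [show (fun u : ℝ => (t-u)^a) = (fun u : ℝ => u^a) ∘ (fun u => t - u) from rfl]
    rw [show (∫ u in (0:ℝ)..t, ((fun u : ℝ => u^a) ∘ (fun u => t - u)) u) = ∫ x in t-t..t-0, x^a from
      intervalIntegral.integral_comp_sub_left _ t]
    rw [integral_pow]
    have h2 : ((a+0+1).factorial : ℝ) ≠ 0 := by positivity
    rw [Nat.add_zero, Nat.factorial_succ] at *
    push_cast at *
    field_simp
    ring
  | succ r ih =>
    intro a t
    have ha : ((a:ℝ)+1) ≠ 0 := by positivity
    have hv : ∀ x : ℝ, HasDerivAt (fun x : ℝ => -(t-x)^(a+1)/((a:ℝ)+1)) ((t-x)^a) x := by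
      intro x
      have h := (((hasDerivAt_pow (a+1) (t - x)).comp x
        ((hasDerivAt_const x t).sub (hasDerivAt_id x))).neg).div_const ((a:ℝ)+1)
      have hval : -(↑(a + 1) * (t - x) ^ (a + 1 - 1) * (0 - 1)) / ((a:ℝ) + 1) = (t-x)^a := by
        push_cast; field_simp; ring
      rw [hval] at h
      exact h
    have key := intervalIntegral.integral_mul_deriv_eq_deriv_mul (a := (0:ℝ)) (b := t)
      (u := fun x => x^(r+1)) (u' := fun x => ((r:ℝ)+1)*x^r)
      (v := fun x => -(t-x)^(a+1)/((a:ℝ)+1)) (v' := fun x => (t-x)^a)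
      (fun x _ => by simpa using (hasDerivAt_pow (r+1) x))
      (fun x _ => hv x)
      (Continuous.intervalIntegrable (by continuity) _ _)
      (Continuous.intervalIntegrable (by continuity) _ _)
    have e1 : (∫ u in (0:ℝ)..t, (t-u)^a * u^(r+1)) = ∫ x in (0:ℝ)..t, x^(r+1) * (t-x)^a :=
      intervalIntegral.integral_congr (fun x _ => by ring)
    have e2 : (∫ x in (0:ℝ)..t, ((r:ℝ)+1)*x^r * (-(t-x)^(a+1)/((a:ℝ)+1)))
        = (-((r:ℝ)+1)/((a:ℝ)+1)) * ∫ x in (0:ℝ)..t, (t-x)^(a+1) * x^r := by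
      rw [← intervalIntegral.integral_const_mul]
      exact intervalIntegral.integral_congr (fun x _ => by simp; ring)
    rw [e1, key, e2, ih (a+1) t]
    rw [show (a+1)+r+1 = a+(r+1)+1 from by omega]
    have h2 : ((a+(r+1)+1).factorial : ℝ) ≠ 0 := by positivity
    simp only [sub_self, zero_pow (Nat.succ_ne_zero a), zero_pow (Nat.succ_ne_zero r)]
    push_cast [Nat.factorial_succ]
    field_simp
    ring

open Finset in
lemma lemB11 (a c : ℕ) (t : ℝ) :
    (∫ u in (0:ℝ)..t, (t-u)^a / (a.factorial : ℝ) * ((1-u)^c / (c.factorial : ℝ)))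
    = ∑ r ∈ range (c+1), (-1:ℝ)^r / ((c-r).factorial * (a+r+1).factorial) * t^(a+r+1) := by
  have h1 : ∀ u : ℝ, (t-u)^a / (a.factorial : ℝ) * ((1-u)^c / (c.factorial : ℝ))
      = ∑ m ∈ range (c+1),
        ((-1:ℝ)^(m+c) * (c.choose m : ℝ) / ((a.factorial : ℝ) * c.factorial)) * ((t-u)^a * u^(c-m)) := by
    intro u
    rw [show ((1:ℝ)-u)^c = _ from sub_pow 1 u c, Finset.sum_div, Finset.mul_sum]
    exact Finset.sum_congr rfl fun m _ => by ring
  rw [intervalIntegral.integral_congr (fun u _ => h1 u)]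
  rw [intervalIntegral.integral_finset_sum (fun m _ =>
    Continuous.intervalIntegrable (by continuity) _ _)]
  rw [← Finset.sum_range_reflect]
  apply Finset.sum_congr rfl
  intro m hm
  have hm' : m ≤ c := by simpa using Nat.lt_succ_iff.mp (Finset.mem_range.mp hm)
  rw [intervalIntegral.integral_const_mul, lemA11]
  rw [show c + 1 - 1 - m = c - m from by omega, Nat.sub_sub_self hm']
  have hsign : (-1:ℝ)^(c-m+c) = (-1)^m := by
    rw [show c-m+c = m + 2*(c-m) from by omega, pow_add, pow_mul]
    simp
  rw [hsign, Nat.cast_choose ℝ (Nat.sub_le c m), Nat.sub_sub_self hm']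
  have h2 : ((a+m+1).factorial : ℝ) ≠ 0 := by positivity
  have h3 : ((a:ℕ).factorial : ℝ) ≠ 0 := by positivity
  have h4 : ((c:ℕ).factorial : ℝ) ≠ 0 := by positivity
  have h5 : ((m:ℕ).factorial : ℝ) ≠ 0 := by positivity
  have h6 : (((c-m)).factorial : ℝ) ≠ 0 := by positivity
  field_simp

open Finset in
lemma lemC11 (c : ℕ → ℝ) (m : ℕ → ℕ) (K : ℕ) : ∀ i : ℕ,
    iteratedDeriv i (fun x : ℝ => ∑ r ∈ range K, c r * x ^ (m r)) =
    fun x : ℝ => ∑ r ∈ range K, c r * (((m r).descFactorial i : ℝ) * x ^ (m r - i)) := by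
  intro i
  induction i with
  | zero => simp [iteratedDeriv_zero]
  | succ i ih =>
    rw [iteratedDeriv_succ, ih]
    funext x
    rw [deriv_fun_sum (fun r _ => by fun_prop)]
    apply Finset.sum_congr rfl
    intro r _
    rw [deriv_const_mul _ (by fun_prop), deriv_const_mul _ (by fun_prop), deriv_pow_field]
    rw [Nat.descFactorial_succ]
    push_cast
    rw [show m r - (i+1) = m r - i - 1 from by omega]
    ring

open Finset in
lemma lemD11 (n k i : ℕ) (hk : 1 ≤ k) (hkn : k ≤ n) (hi1 : n ≤ i) :
    (∑ r ∈ range k, (-1:ℝ)^r / (((k-1-r).factorial : ℝ) * ((n+r).factorial : ℝ))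
      * (((n+r).descFactorial i : ℝ)))
    = if i = k + n - 1 then (-1:ℝ)^(k-1) else 0 := by
  by_cases hbig : n + k ≤ i
  · rw [Finset.sum_eq_zero, if_neg (by omega)]
    intro r hr
    have hr' : r < k := Finset.mem_range.mp hr
    have : (n+r).descFactorial i = 0 := Nat.descFactorial_eq_zero_iff_lt.mpr (by omega)
    simp [this]
  · push_neg at hbig
    set s := i - n with hs
    have hsk : s ≤ k - 1 := by omega
    have hi : i = n + s := by omega
    set K := k - 1 - s with hK
    have hkeq : k = s + (K + 1) := by omega
    rw [hkeq, Finset.sum_range_add]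
    have hz : (∑ r ∈ range s, (-1:ℝ)^r / (((s+(K+1)-1-r).factorial : ℝ) * ((n+r).factorial : ℝ))
        * ((n+r).descFactorial i : ℝ)) = 0 := by
      apply Finset.sum_eq_zero
      intro r hr
      have hr' : r < s := Finset.mem_range.mp hr
      have : (n+r).descFactorial i = 0 := Nat.descFactorial_eq_zero_iff_lt.mpr (by omega)
      simp [this]
    rw [hz, zero_add]
    have halt : (∑ m ∈ range (K+1), ((-1:ℝ)^m * (K.choose m : ℝ))) = if K = 0 then 1 else 0 := by
      have h := congrArg (Int.cast : ℤ → ℝ) (Int.alternating_sum_range_choose (n := K))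
      push_cast at h
      convert h using 2
    have hterm : ∀ m ∈ range (K+1),
        (-1:ℝ)^(s+m) / (((s+(K+1)-1-(s+m)).factorial : ℝ) * ((n+(s+m)).factorial : ℝ))
          * ((n+(s+m)).descFactorial i : ℝ)
        = (-1:ℝ)^s / (K.factorial : ℝ) * ((-1:ℝ)^m * (K.choose m : ℝ)) := by
      intro m hm
      have hm' : m ≤ K := by simpa using Nat.lt_succ_iff.mp (Finset.mem_range.mp hm)
      have hd : ((n+(s+m)).descFactorial i : ℝ) = ((n+s+m).factorial : ℝ) / (m.factorial : ℝ) := by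
        have h := Nat.factorial_mul_descFactorial (show i ≤ n+(s+m) from by omega)
        rw [show n+(s+m)-i = m from by omega] at h
        have h2 := congrArg (Nat.cast : ℕ → ℝ) h
        push_cast at h2
        rw [eq_div_iff (by positivity), show n+s+m = n+(s+m) from by omega]
        linarith
      rw [hd, show s+(K+1)-1-(s+m) = K - m from by omega, Nat.cast_choose ℝ hm', pow_add,
        show n+(s+m) = n+s+m from by omega]
      have h3 : ((n+s+m).factorial : ℝ) ≠ 0 := by positivity
      have h4 : ((K-m).factorial : ℝ) ≠ 0 := by positivity
      have h5 : ((m:ℕ).factorial : ℝ) ≠ 0 := by positivity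
      have h6 : ((K:ℕ).factorial : ℝ) ≠ 0 := by positivity
      field_simp
    rw [Finset.sum_congr rfl hterm, ← Finset.mul_sum, halt]
    by_cases hK0 : K = 0
    · rw [if_pos hK0, if_pos (by omega)]
      rw [show s = k - 1 from by omega]
      simp [hK0]
    · rw [if_neg hK0, if_neg (by omega)]
      simp

theorem stmt11 (n k : ℕ) (hk : 1 ≤ k) (hkn : k ≤ n) (f : ℝ → ℝ)
    (hf : ∀ t : ℝ, f t = ∫ u in (0:ℝ)..t,
      ((t-u)^(n-1) / (Nat.factorial (n-1))) * ((1-u)^(k-1) / (Nat.factorial (k-1))))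
    (i : ℕ) (hi1 : n ≤ i) (hi2 : i ≤ 2*n - 1) :
    iteratedDeriv i f 1 = if i = k + n - 1 then (-1 : ℝ)^(k-1) else 0 := by
  have hfe : f = fun t : ℝ => ∑ r ∈ Finset.range k,
      ((-1:ℝ)^r / (((k-1-r).factorial : ℝ) * ((n+r).factorial : ℝ))) * t^(n+r) := by
    funext t
    rw [hf t]
    have h := lemB11 (n-1) (k-1) t
    rw [Nat.sub_add_cancel hk] at h
    rw [h]
    apply Finset.sum_congr rfl
    intro r _
    rw [show n-1+r+1 = n+r from by omega]
  rw [hfe, lemC11]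
  simp only [one_pow, mul_one]
  exact lemD11 n k i hk hkn hi1
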